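/- Asymptotic bias bound (Corollary): For Pauli noise with distance v to white noise and fixed total error rate p_tot = p_err·L, as L → ∞ the right-hand side of the average-bias bound satisfies sqrt(((2^n−1)/(2^n+1))(1 − (s²/u)^L)) ≤ v·p_tot/√L + o(1/√L), i.e., the average bias decays as O(v p_tot/√L). -/

import Mathlib

open Filter

lemma aux_one_sub_pow_le (x : ℝ) (hx0 : 0 ≤ x) (hx1 : x ≤ 1) (L : ℕ) :
    1 - x ^ L ≤ L * (1 - x) := by
  induction L with
  | zero => simp
  | succ L ih =>
    have hxL : x ^ L ≤ 1 := pow_le_one₀ hx0 hx1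
    have hxL0 : 0 ≤ x ^ L := pow_nonneg hx0 L
    have hL0 : (0:ℝ) ≤ L := Nat.cast_nonneg L
    rw [pow_succ]
    push_cast
    nlinarith [mul_le_mul_of_nonneg_left ih hx0,
      mul_nonneg hL0 (mul_nonneg (sub_nonneg.mpr hx1) (sub_nonneg.mpr hx1))]


/-- For Pauli noise with fixed normalized error probabilities
`q i = p i / p_err` (so `∑ q i = 1`), distance `v` to white noise, and fixed total
error rate `p_tot = p_err L` (so `p_err = p_tot / L`), as `L → ∞` the right-hand side
of the average-bias bound satisfies
`sqrt(((2^n−1)/(2^n+1))(1 − (s²/u)^L)) ≤ v p_tot/√L + o(1/√L)`,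
where `s = 1 − (4^n/(4^n−1)) p_err` and
`u = 1 − (4^n/(4^n−1)) 2 p_err + (4^n/(4^n−1))(p_err² + ∑ (q i p_err)²)`. -/
theorem stmt14 (n : ℕ) (hn : 1 ≤ n) (q : Fin (4 ^ n - 1) → ℝ)
    (hq : ∀ i, 0 ≤ q i) (hq1 : ∑ i, q i = 1) (ptot : ℝ) (hptot : 0 < ptot) :
    let c : ℝ := (4 : ℝ) ^ n / ((4 : ℝ) ^ n - 1)
    let v : ℝ := Real.sqrt ((∑ i, q i ^ 2) - 1 / ((4 : ℝ) ^ n - 1))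
    let s : ℕ → ℝ := fun L => 1 - c * (ptot / L)
    let u : ℕ → ℝ := fun L =>
      1 - c * 2 * (ptot / L) + c * ((ptot / L) ^ 2 + ∑ i, (q i * (ptot / L)) ^ 2)
    ∃ g : ℕ → ℝ,
      g =o[atTop] (fun L : ℕ => 1 / Real.sqrt L)
      ∧ ∀ᶠ L : ℕ in atTop,
        Real.sqrt ((((2 : ℝ) ^ n - 1) / ((2 : ℝ) ^ n + 1)) * (1 - (s L ^ 2 / u L) ^ L))
          ≤ v * ptot / Real.sqrt L + g L := by
  intro c v s u
  set t : ℝ := (2 : ℝ) ^ n with ht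
  have ht2 : (2 : ℝ) ≤ t := by
    calc (2:ℝ) = 2 ^ 1 := (pow_one 2).symm
    _ ≤ 2 ^ n := pow_le_pow_right₀ (by norm_num) hn
  have h4 : (4 : ℝ) ^ n = t ^ 2 := by
    rw [ht, ← pow_mul, show (4:ℝ) = 2 ^ 2 by norm_num, ← pow_mul, Nat.mul_comm]
  have hN1 : (1 : ℝ) < (4 : ℝ) ^ n := by nlinarith
  have hNpos : (0 : ℝ) < (4 : ℝ) ^ n - 1 := by linarith
  have hcpos : 0 < c := by
    show 0 < (4:ℝ) ^ n / ((4:ℝ) ^ n - 1)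
    positivity
  set A : ℝ := (t - 1) / (t + 1) with hA
  have hApos : 0 < A := div_pos (by linarith) (by linarith)
  have ht1 : t - 1 ≠ 0 := by linarith
  have ht1' : t + 1 ≠ 0 := by linarith
  have hAc : A * c = t ^ 2 / (t + 1) ^ 2 := by
    rw [hA]
    show (t - 1) / (t + 1) * ((4:ℝ) ^ n / ((4:ℝ) ^ n - 1)) = t ^ 2 / (t + 1) ^ 2
    rw [h4]
    have : t ^ 2 - 1 ≠ 0 := by nlinarith
    field_simp
    ring
  have hAclt : A * c < 1 := by
    rw [hAc, div_lt_one (by positivity)]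
    nlinarith
  have hAcpos : 0 < A * c := mul_pos hApos hcpos
  have hcard : ((Fintype.card (Fin (4 ^ n - 1)) : ℝ)) = (4 : ℝ) ^ n - 1 := by
    rw [Fintype.card_fin]
    have h : (1:ℕ) ≤ 4 ^ n := Nat.one_le_pow _ _ (by norm_num)
    rw [Nat.cast_sub h]
    push_cast
    ring
  have hCS : 1 / ((4 : ℝ) ^ n - 1) ≤ ∑ i, q i ^ 2 := by
    have := sq_sum_le_card_mul_sum_sq (s := (Finset.univ : Finset (Fin (4 ^ n - 1)))) (f := q)
    rw [hq1] at this
    rw [div_le_iff₀ hNpos]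
    calc (1:ℝ) = 1 ^ 2 := by norm_num
    _ ≤ ((Finset.univ : Finset (Fin (4^n-1))).card : ℝ) * ∑ i, q i ^ 2 := by exact_mod_cast this
    _ = (∑ i, q i ^ 2) * ((4:ℝ)^n - 1) := by
        rw [Finset.card_univ, hcard]; ring
  have hv2 : v ^ 2 = (∑ i, q i ^ 2) - 1 / ((4 : ℝ) ^ n - 1) :=
    Real.sq_sqrt (by linarith)
  have hvpos : 0 ≤ v := Real.sqrt_nonneg _
  have hc1 : c = 1 + 1 / ((4:ℝ)^n - 1) := by
    show (4:ℝ) ^ n / ((4:ℝ) ^ n - 1) = 1 + 1 / ((4:ℝ)^n - 1)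
    field_simp
    ring
  clear_value t A c v
  refine ⟨fun _ => 0, Asymptotics.isLittleO_zero _ _, ?_⟩
  have hev1 : ∀ᶠ L : ℕ in atTop, ptot / (L : ℝ) ≤ (1 - A * c) / (2 * c) := by
    refine (tendsto_const_div_atTop_nhds_zero_nat ptot).eventually (eventually_le_nhds ?_)
    exact div_pos (by linarith) (by positivity)
  filter_upwards [hev1, eventually_ge_atTop 1] with L hL1 hL2
  have hLpos : (0 : ℝ) < L := by exact_mod_cast hL2
  set p : ℝ := ptot / L with hp
  have hppos : 0 < p := div_pos hptot hLpos
  have hsum2 : ∑ i, (q i * p) ^ 2 = (∑ i, q i ^ 2) * p ^ 2 := by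
    rw [Finset.sum_mul]; exact Finset.sum_congr rfl fun i _ => by ring
  have huAc : A * c ≤ u L := by
    have h1 : 1 - 2 * (c * p) ≤ u L := by
      have h0 : 0 ≤ c * (p ^ 2 + ∑ i, (q i * p) ^ 2) := by
        have : 0 ≤ ∑ i, (q i * p) ^ 2 := Finset.sum_nonneg fun i _ => sq_nonneg _
        positivity
      simp only [u]
      rw [← hp]
      nlinarith
    have h2 : c * p ≤ (1 - A * c) / 2 := by
      have := mul_le_mul_of_nonneg_left hL1 hcpos.le
      have heq : c * ((1 - A * c) / (2 * c)) = (1 - A * c) / 2 := by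
        field_simp
      rw [hp]
      linarith [this, heq.le]
    linarith
  have hupos : 0 < u L := lt_of_lt_of_le hAcpos huAc
  have hus : u L - s L ^ 2 = c * p ^ 2 * v ^ 2 := by
    simp only [u, s]
    rw [← hp, hsum2, hv2, hc1]
    ring
  clear_value s u
  have hr1 : s L ^ 2 / u L ≤ 1 := by
    rw [div_le_one hupos]
    nlinarith [hus, mul_nonneg (mul_nonneg hcpos.le (sq_nonneg p)) (sq_nonneg v)]
  have hr0 : 0 ≤ s L ^ 2 / u L := div_nonneg (sq_nonneg _) hupos.le
  have h1r : 1 - s L ^ 2 / u L = c * p ^ 2 * v ^ 2 / u L := by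
    rw [← hus, eq_div_iff hupos.ne', sub_mul, div_mul_cancel₀ _ hupos.ne', one_mul]
  have key : A * (1 - (s L ^ 2 / u L) ^ L) ≤ v ^ 2 * ptot ^ 2 / L := by
    calc A * (1 - (s L ^ 2 / u L) ^ L)
        ≤ A * (L * (1 - s L ^ 2 / u L)) := by
          exact mul_le_mul_of_nonneg_left (aux_one_sub_pow_le _ hr0 hr1 L) hApos.le
    _ = (L : ℝ) * (p ^ 2 * v ^ 2) * (A * c / u L) := by rw [h1r]; ring
    _ ≤ (L : ℝ) * (p ^ 2 * v ^ 2) * 1 := by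
          refine mul_le_mul_of_nonneg_left ?_ (by positivity)
          rw [div_le_one hupos]; exact huAc
    _ = v ^ 2 * ptot ^ 2 / L := by
          rw [hp, mul_one, div_pow]
          field_simp
  have hsq : Real.sqrt (v ^ 2 * ptot ^ 2 / (L : ℝ)) = v * ptot / Real.sqrt L := by
    rw [show v ^ 2 * ptot ^ 2 = (v * ptot) ^ 2 by ring,
      Real.sqrt_div (sq_nonneg (v * ptot)) (L : ℝ),
      Real.sqrt_sq (mul_nonneg hvpos hptot.le)]
  have final : Real.sqrt (A * (1 - (s L ^ 2 / u L) ^ L)) ≤ v * ptot / Real.sqrt L := by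
    rw [← hsq]
    exact Real.sqrt_le_sqrt key
  rw [add_zero]
  exact final
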